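/- Let n ≥ 1 and let (p_{β,γ})_{β∈ℤ²} ⊂ M_n(ℂ), depending on a parameter γ ∈ ℝ∖{0}, satisfy: (i) for every N ∈ ℕ there is C_N > 0 with ‖p_{β,γ}‖ ≤ C_N(1+|β₁|+|β₂|)^{−N} for all β and γ, and (ii) p_{−β,γ} = p_{β,γ}* for all β and γ. Then the bounded operators A_γ and Q_γ on ℓ²(ℤ²;ℂⁿ) are unitarily equivalent: there is a unitary operator U on ℓ²(ℤ²;ℂⁿ) with U A_γ U* = Q_γ (one may take the diagonal unitary (Uv)_α = e^{iγα₁α₂/2} v_α). -/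

import Mathlib

/- STATEMENT 0: the bounded operators `A_γ` and `Q_γ` on `ℓ²(ℤ²;ℂⁿ)` attached to a rapidly
decaying, self-adjoint family of matrix coefficients `p_{β,γ}` are unitarily equivalent. -/

open Complex Matrix

attribute [local instance] Matrix.normedAddCommGroup

noncomputable section

/-- `ℓ²(ℤ²;ℂⁿ)`. -/
abbrev lpZ2 (n : ℕ) : Type := lp (fun _ : ℤ × ℤ => EuclideanSpace ℂ (Fin n)) 2

lemma phase_mem' {n : ℕ} (c : ℤ × ℤ → ℂ) (hc : ∀ α, ‖c α‖ = 1) (v : lpZ2 n) :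
    Memℓp (fun α => c α • (v : ∀ _ : ℤ × ℤ, EuclideanSpace ℂ (Fin n)) α) 2 := by
  apply memℓp_gen
  refine ((memℓp_gen_iff (p := 2) (by norm_num)).1 (lp.memℓp v)).congr fun α => ?_
  rw [norm_smul, hc, one_mul]

/-- Diagonal multiplication by a unimodular phase, as a linear isometry equivalence of
`ℓ²(ℤ²;ℂⁿ)`. -/
def phaseU' {n : ℕ} (c d : ℤ × ℤ → ℂ) (hc : ∀ α, ‖c α‖ = 1) (hd : ∀ α, ‖d α‖ = 1)
    (hcd : ∀ α, c α * d α = 1) : lpZ2 n ≃ₗᵢ[ℂ] lpZ2 n where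
  toFun v := ⟨fun α => c α • v α, phase_mem' c hc v⟩
  invFun v := ⟨fun α => d α • v α, phase_mem' d hd v⟩
  map_add' u v := lp.ext (funext fun α => by simp [smul_add]; rfl)
  map_smul' r v := lp.ext (funext fun α => by
    show c α • (r • v) α = r • (c α • v α)
    rw [lp.coeFn_smul, Pi.smul_apply, smul_comm])
  left_inv v := lp.ext (funext fun α => by
    show d α • c α • (v α) = v α
    rw [smul_smul, mul_comm, hcd, one_smul])
  right_inv v := lp.ext (funext fun α => by
    show c α • d α • (v α) = v α
    rw [smul_smul, hcd, one_smul])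
  norm_map' v := by
    rw [lp.norm_eq_tsum_rpow (by norm_num), lp.norm_eq_tsum_rpow (p := 2) (by norm_num) v]
    congr 1
    refine tsum_congr fun α => ?_
    show ‖c α • (v α)‖ ^ ENNReal.toReal 2 = ‖v α‖ ^ ENNReal.toReal 2
    rw [norm_smul, hc, one_mul]

theorem stmt0 (n : ℕ) (hn : 1 ≤ n)
    (p : ℤ × ℤ → ℝ → Matrix (Fin n) (Fin n) ℂ)
    -- (i) rapid decay, uniformly in γ
    (hdecay : ∀ N : ℕ, ∃ C : ℝ, 0 < C ∧ ∀ β : ℤ × ℤ, ∀ γ : ℝ, γ ≠ 0 →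
      ‖p β γ‖ ≤ C / ((1 + |β.1| + |β.2| : ℤ) : ℝ) ^ N)
    -- (ii) symmetry `p_{−β,γ} = p_{β,γ}*`
    (hsym : ∀ β : ℤ × ℤ, ∀ γ : ℝ, γ ≠ 0 → p (-β) γ = (p β γ)ᴴ)
    (γ : ℝ) (hγ : γ ≠ 0)
    (A Q : lpZ2 n →L[ℂ] lpZ2 n)
    -- `(A_γ)_{α,β} = e^{−i(γ/2) α∧β} p_{α−β,γ}`
    (hA : ∀ v : lpZ2 n, ∀ α : ℤ × ℤ, ∀ j : Fin n,
      (A v) α j = ∑' β : ℤ × ℤ,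
        Complex.exp (-Complex.I * ((γ : ℂ)/2) * ((α.1 * β.2 - α.2 * β.1 : ℤ) : ℂ)) *
          ∑ k : Fin n, p (α - β) γ j k * v β k)
    -- `Q_γ = Σ_β p_{β,γ} e^{iγβ₁β₂/2} τ₁^{β₁} τ₂^{β₂}`, i.e.
    -- `(Q_γ v)_α = Σ_β e^{iγβ₁β₂/2} e^{iγ(α₁−β₁)β₂} p_{β,γ} v_{α−β}`
    (hQ : ∀ v : lpZ2 n, ∀ α : ℤ × ℤ, ∀ j : Fin n,
      (Q v) α j = ∑' β : ℤ × ℤ,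
        Complex.exp (Complex.I * (γ : ℂ) * ((β.1 * β.2 : ℤ) : ℂ) / 2) *
          Complex.exp (Complex.I * (γ : ℂ) * (((α.1 - β.1) * β.2 : ℤ) : ℂ)) *
          ∑ k : Fin n, p β γ j k * v (α - β) k) :
    ∃ U : lpZ2 n ≃ₗᵢ[ℂ] lpZ2 n, ∀ v : lpZ2 n, U (A (U.symm v)) = Q v := by
  classical
  set c : ℤ × ℤ → ℂ := fun α => Complex.exp ((γ * α.1 * α.2 / 2 : ℝ) * Complex.I) with hcdef
  set d : ℤ × ℤ → ℂ :=
    fun α => Complex.exp ((-(γ * α.1 * α.2 / 2) : ℝ) * Complex.I) with hddef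
  have hc : ∀ α, ‖c α‖ = 1 := fun α => by
    show ‖Complex.exp ((γ * α.1 * α.2 / 2 : ℝ) * Complex.I)‖ = 1
    rw [Complex.norm_exp_ofReal_mul_I]
  have hd : ∀ α, ‖d α‖ = 1 := fun α => by
    show ‖Complex.exp ((-(γ * α.1 * α.2 / 2) : ℝ) * Complex.I)‖ = 1
    rw [Complex.norm_exp_ofReal_mul_I]
  have hcd : ∀ α, c α * d α = 1 := fun α => by
    rw [hcdef, hddef]
    simp only
    rw [← Complex.exp_add,
      show ((γ * α.1 * α.2 / 2 : ℝ) : ℂ) * Complex.I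
          + ((-(γ * α.1 * α.2 / 2) : ℝ) : ℂ) * Complex.I = 0 by push_cast; ring,
      Complex.exp_zero]
  set U : lpZ2 n ≃ₗᵢ[ℂ] lpZ2 n := phaseU' c d hc hd hcd with hUdef
  refine ⟨U, fun v => ?_⟩
  refine lp.ext (funext fun α => PiLp.ext fun j => ?_)
  have hUs : ∀ (w : lpZ2 n) (β : ℤ × ℤ) (k : Fin n),
      (U.symm w) β k = d β * w β k := fun _ _ _ => rfl
  have hL : (U (A (U.symm v))) α j = c α * (A (U.symm v)) α j := rfl
  have hRc : (Q v : ∀ _ : ℤ × ℤ, EuclideanSpace ℂ (Fin n)) α j = (Q v) α j := rfl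
  rw [hL, hA (U.symm v) α j, hRc, hQ v α j]
  rw [← tsum_mul_left]
  conv_rhs => rw [← Equiv.tsum_eq (Equiv.subLeft α)]
  refine tsum_congr fun β => ?_
  simp only [hUs, Equiv.subLeft_apply, Prod.fst_sub, Prod.snd_sub, sub_sub_cancel]
  have hsum : ∑ k : Fin n, p (α - β) γ j k * (d β * v β k)
      = d β * ∑ k : Fin n, p (α - β) γ j k * v β k := by
    rw [Finset.mul_sum]; exact Finset.sum_congr rfl fun k _ => by ring
  rw [hsum]
  have hphase :
      c α * Complex.exp (-Complex.I * ((γ : ℂ)/2) * ((α.1 * β.2 - α.2 * β.1 : ℤ) : ℂ)) * d β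
        = Complex.exp (Complex.I * (γ : ℂ) * (((α.1 - β.1) * (α.2 - β.2) : ℤ) : ℂ) / 2) *
          Complex.exp (Complex.I * (γ : ℂ) * (((α.1 - (α.1 - β.1)) * (α.2 - β.2) : ℤ) : ℂ)) := by
    rw [hcdef, hddef]
    simp only
    rw [← Complex.exp_add, ← Complex.exp_add, ← Complex.exp_add]
    congr 1
    push_cast
    ring
  calc c α * (Complex.exp (-Complex.I * ((γ : ℂ)/2) * ((α.1 * β.2 - α.2 * β.1 : ℤ) : ℂ)) *
          (d β * ∑ k : Fin n, p (α - β) γ j k * v β k))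
      = (c α * Complex.exp (-Complex.I * ((γ : ℂ)/2) * ((α.1 * β.2 - α.2 * β.1 : ℤ) : ℂ)) * d β) *
          ∑ k : Fin n, p (α - β) γ j k * v β k := by ring
    _ = _ := by rw [hphase]; ring
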